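/- In any connected chordal graph G there exists a clique that intersects every longest path of G (a total clique exists). -/

import Mathlib

open SimpleGraph

def IsChordal {V : Type*} (G : SimpleGraph V) : Prop :=
  ∀ ⦃u : V⦄ (c : G.Walk u u), c.IsCycle → 4 ≤ c.length →
    ∃ x y : V, x ∈ c.support ∧ y ∈ c.support ∧ G.Adj x y ∧ s(x, y) ∉ c.edges

def IsDetour {V : Type*} (G : SimpleGraph V) {u v : V} (P : G.Walk u v) : Prop :=
  P.IsPath ∧ ∀ ⦃x y : V⦄ (Q : G.Walk x y), Q.IsPath → Q.length ≤ P.length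

namespace TotalCliqueProof

open SimpleGraph Walk

variable {V : Type*} {G : SimpleGraph V}

def SimpIn (G : SimpleGraph V) (U : Finset V) (v : V) : Prop :=
  v ∈ U ∧ ∀ ⦃x⦄, x ∈ U → ∀ ⦃y⦄, y ∈ U → G.Adj v x → G.Adj v y → x ≠ y → G.Adj x y

def ConnIn (G : SimpleGraph V) (S : Set V) : Prop :=
  ∀ ⦃x⦄, x ∈ S → ∀ ⦃y⦄, y ∈ S → ∃ w : G.Walk x y, ∀ z ∈ w.support, z ∈ S

def Touch (G : SimpleGraph V) (S T : Set V) : Prop :=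
  ∃ s ∈ S, ∃ t ∈ T, s = t ∨ G.Adj s t

lemma append_isPath {u v w : V} {p : G.Walk u v} {q : G.Walk v w} (hp : p.IsPath)
    (hq : q.IsPath) (h : ∀ z, z ∈ p.support → z ∈ q.support → z = v) :
    (p.append q).IsPath := by
  rw [Walk.isPath_def, Walk.support_append]
  refine List.Nodup.append hp.support_nodup (hq.support_nodup.tail) ?_
  intro z hz1 hz2
  have hz2' : z ∈ q.support := List.mem_of_mem_tail hz2
  have : z = v := h z hz1 hz2'
  subst this
  have := hq.support_nodup
  rw [q.support_eq_cons] at this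
  exact (List.nodup_cons.mp this).1 hz2

lemma getVert_length_takeUntil [DecidableEq V] {x y u : V} (P : G.Walk x y)
    (h : u ∈ P.support) : P.getVert ((P.takeUntil u h).length) = u := by
  obtain hs := P.take_spec h
  set T := P.takeUntil u h
  set D := P.dropUntil u h
  rw [← hs, Walk.getVert_append]
  simp

lemma getVert_length_takeUntil_succ [DecidableEq V] {x y u : V} (P : G.Walk x y)
    (h : u ∈ P.support) :
    P.getVert ((P.takeUntil u h).length + 1) = (P.dropUntil u h).getVert 1 := by
  obtain hs := P.take_spec h
  set T := P.takeUntil u h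
  set D := P.dropUntil u h
  rw [← hs, Walk.getVert_append]
  simp

/-- A walk of minimal length in a support-monotone class has all adjacencies
among its support vertices realized as edges. -/
lemma chord_of_min {x y : V} {Pred : V → Prop} (P : G.Walk x y)
    (hP : ∀ z ∈ P.support, Pred z)
    (hmin : ∀ w : G.Walk x y, (∀ z ∈ w.support, Pred z) → P.length ≤ w.length)
    {u v : V} (hu : u ∈ P.support) (hv : v ∈ P.support) (huv : G.Adj u v) :
    s(u, v) ∈ P.edges := by
  classical
  have key : ∀ (u v : V) (hu : u ∈ P.support) (hv : v ∈ P.support), G.Adj u v →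
      (P.takeUntil u hu).length < (P.takeUntil v hv).length → s(u, v) ∈ P.edges := by
    intro u v hu hv huv hlt
    -- shortcut walk : takeUntil u, edge, dropUntil v
    have hshort : P.length ≤ (P.takeUntil u hu).length + 1 + (P.dropUntil v hv).length := by
      have := hmin ((P.takeUntil u hu).append (Walk.cons huv (P.dropUntil v hv))) ?_
      · rw [Walk.length_append, Walk.length_cons] at this
        omega
      · intro z hz
        rw [Walk.mem_support_append_iff] at hz
        rcases hz with hz | hz
        · exact hP z (P.support_takeUntil_subset hu hz)
        · rw [Walk.support_cons] at hz
          rcases List.mem_cons.mp hz with rfl | hz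
          · exact hP z hu
          · exact hP z (P.support_dropUntil_subset hv hz)
    have hsplit : (P.takeUntil v hv).length + (P.dropUntil v hv).length = P.length := by
      have := congrArg Walk.length (P.take_spec hv)
      rwa [Walk.length_append] at this
    -- so length (takeUntil v) ≤ length (takeUntil u) + 1, with hlt: equality
    have heq : (P.takeUntil v hv).length = (P.takeUntil u hu).length + 1 := by omega
    -- getVert facts
    have hgv := getVert_length_takeUntil P hv
    have hgu := getVert_length_takeUntil_succ P hu
    have hlen : (P.takeUntil u hu).length + 1 ≤ P.length := by
      have := P.length_takeUntil_le hv
      omega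
    have husplit : (P.takeUntil u hu).length + (P.dropUntil u hu).length = P.length := by
      have := congrArg Walk.length (P.take_spec hu)
      rwa [Walk.length_append] at this
    have hdu : ¬ (P.dropUntil u hu).Nil := by
      rw [Walk.not_nil_iff_lt_length]
      omega
    obtain ⟨z, hz, d, hd⟩ := Walk.not_nil_iff.mp hdu
    have hz1 : (P.dropUntil u hu).getVert 1 = z := by
      rw [hd, Walk.getVert_cons_succ, Walk.getVert_zero]
    have hvz : v = z := by
      rw [← hgv, heq, hgu, hz1]
    subst hvz
    have : s(u, v) ∈ (P.dropUntil u hu).edges := by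
      rw [hd, Walk.edges_cons]
      exact List.mem_cons_self
    exact P.edges_dropUntil_subset hu this
  rcases lt_trichotomy (P.takeUntil u hu).length (P.takeUntil v hv).length with h | h | h
  · exact key u v hu hv huv h
  · exfalso
    have hgu := getVert_length_takeUntil P hu
    have hgv := getVert_length_takeUntil P hv
    exact huv.ne (by rw [← hgu, ← hgv, h])
  · rw [Sym2.eq_swap]
    exact key v u hv hu huv.symm h

lemma count_one_not_mem_tail_reverse [DecidableEq V] {x v : V} (t : G.Walk x v)
    (hc : t.support.count v = 1) {u : V} {hvu : G.Adj v u} {r : G.Walk u x}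
    (hr : t.reverse = Walk.cons hvu r) : v ∉ r.support := by
  have h1 : t.reverse.support.count v = 1 := by
    rw [Walk.support_reverse, List.count_reverse]
    exact hc
  rw [hr, Walk.support_cons, List.count_cons_self] at h1
  intro hmem
  have h2 : 0 < r.support.count v := List.count_pos_iff.mpr hmem
  omega

lemma reroute {U : Finset V} {v : V} (hs : SimpIn G U v) {S : Set V}
    (hSU : ∀ z ∈ S, z ∈ U) :
    ∀ (n : ℕ) {x y : V} (w : G.Walk x y), w.length ≤ n →
      (∀ z ∈ w.support, z ∈ S) → x ≠ v → y ≠ v →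
      ∃ w' : G.Walk x y, ∀ z ∈ w'.support, z ∈ S ∧ z ≠ v := by
  classical
  intro n
  induction n with
  | zero =>
    intro x y w hlen hw hx hy
    refine ⟨w, fun z hz => ⟨hw z hz, ?_⟩⟩
    have : w.support = [x] := by
      have : w.Nil := Walk.nil_iff_length_eq.mpr (Nat.le_zero.mp hlen)
      exact Walk.nil_iff_support_eq.mp this
    rw [this] at hz
    simp at hz
    subst hz
    exact hx
  | succ n ih =>
    intro x y w hlen hw hx hy
    by_cases hv : v ∈ w.support
    · set t := w.takeUntil v hv with ht
      set d := w.dropUntil v hv with hd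
      have hsplit : t.length + d.length = w.length := by
        have := congrArg Walk.length (w.take_spec hv)
        rwa [Walk.length_append] at this
      have htnil : ¬ t.reverse.Nil := by
        rw [Walk.nil_iff_length_eq, Walk.length_reverse]
        intro h0
        exact hx (Walk.eq_of_length_eq_zero h0)
      obtain ⟨u, hvu, r, hr⟩ := Walk.not_nil_iff.mp htnil
      have hdnil : ¬ d.Nil := by
        rw [Walk.nil_iff_length_eq]
        intro h0
        exact hy (Walk.eq_of_length_eq_zero h0).symm
      obtain ⟨u', hvu', d', hd'⟩ := Walk.not_nil_iff.mp hdnil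
      have hvr : v ∉ r.support :=
        count_one_not_mem_tail_reverse t (w.count_support_takeUntil_eq_one hv) hr
      have hrsub : ∀ z ∈ r.support, z ∈ S := by
        intro z hz
        have : z ∈ t.reverse.support := by
          rw [hr, Walk.support_cons]
          exact List.mem_cons_of_mem _ hz
        rw [Walk.support_reverse, List.mem_reverse] at this
        exact hw z (w.support_takeUntil_subset hv this)
      have hd'sub : ∀ z ∈ d'.support, z ∈ S := by
        intro z hz
        have : z ∈ d.support := by
          rw [hd', Walk.support_cons]
          exact List.mem_cons_of_mem _ hz
        exact hw z (w.support_dropUntil_subset hv this)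
      have htlen : t.length = r.length + 1 := by
        have := congrArg Walk.length hr
        rw [Walk.length_reverse, Walk.length_cons] at this
        exact this
      have hdlen : d.length = d'.length + 1 := by
        have := congrArg Walk.length hd'
        rw [Walk.length_cons] at this
        exact this
      have huS : u ∈ S := hrsub u r.start_mem_support
      have hu'S : u' ∈ S := hd'sub u' d'.start_mem_support
      by_cases huu : u = u'
      · subst huu
        refine ih (r.reverse.append d') ?_ ?_ hx hy
        · rw [Walk.length_append, Walk.length_reverse]
          omega
        · intro z hz
          rw [Walk.mem_support_append_iff, Walk.support_reverse, List.mem_reverse] at hz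
          rcases hz with hz | hz
          · exact hrsub z hz
          · exact hd'sub z hz
      · have hadj : G.Adj u u' := hs.2 (hSU u huS) (hSU u' hu'S) hvu hvu' huu
        refine ih (r.reverse.append (Walk.cons hadj d')) ?_ ?_ hx hy
        · rw [Walk.length_append, Walk.length_reverse, Walk.length_cons]
          omega
        · intro z hz
          rw [Walk.mem_support_append_iff, Walk.support_reverse, List.mem_reverse,
            Walk.support_cons] at hz
          rcases hz with hz | hz
          · exact hrsub z hz
          · rcases List.mem_cons.mp hz with rfl | hz
            · exact huS
            · exact hd'sub z hz
    · exact ⟨w, fun z hz => ⟨hw z hz, fun h => hv (h ▸ hz)⟩⟩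

/-- Vertices reachable from `a` inside `U` avoiding `S`. -/
def Comp (G : SimpleGraph V) (U S : Finset V) (a : V) : Set V :=
  {x | ∃ w : G.Walk a x, ∀ z ∈ w.support, z ∈ U ∧ z ∉ S}

/-- `S` separates `a` from `b` within `U`. -/
def Sep (G : SimpleGraph V) (U S : Finset V) (a b : V) : Prop :=
  ∀ w : G.Walk a b, (∀ z ∈ w.support, z ∈ U) → ∃ z ∈ w.support, z ∈ S

lemma mem_comp_self {U S : Finset V} {a : V} (haU : a ∈ U) (haS : a ∉ S) :
    a ∈ Comp G U S a :=
  ⟨Walk.nil, by simp [haU, haS]⟩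

lemma comp_subset {U S : Finset V} {a x : V} (hx : x ∈ Comp G U S a) :
    x ∈ U ∧ x ∉ S := by
  obtain ⟨w, hw⟩ := hx
  exact hw x w.end_mem_support

lemma comp_walk_support {U S : Finset V} {a x : V} {w : G.Walk a x}
    (hw : ∀ z ∈ w.support, z ∈ U ∧ z ∉ S) : ∀ z ∈ w.support, z ∈ Comp G U S a := by
  classical
  intro z hz
  exact ⟨w.takeUntil z hz, fun t ht => hw t (w.support_takeUntil_subset hz ht)⟩

lemma conn_comp {U S : Finset V} {a : V} : ConnIn G (Comp G U S a) := by
  intro x hx y hy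
  obtain ⟨wx, hwx⟩ := hx
  obtain ⟨wy, hwy⟩ := hy
  refine ⟨wx.reverse.append wy, fun z hz => ?_⟩
  rw [Walk.mem_support_append_iff, Walk.support_reverse, List.mem_reverse] at hz
  rcases hz with hz | hz
  · exact comp_walk_support hwx z hz
  · exact comp_walk_support hwy z hz

lemma sep_symm {U S : Finset V} {a b : V} (h : Sep G U S a b) : Sep G U S b a := by
  intro w hw
  obtain ⟨z, hz, hzS⟩ := h w.reverse (by
    intro z hz
    rw [Walk.support_reverse, List.mem_reverse] at hz
    exact hw z hz)
  rw [Walk.support_reverse, List.mem_reverse] at hz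
  exact ⟨z, hz, hzS⟩

lemma comp_disjoint {U S : Finset V} {a b x : V} (hsep : Sep G U S a b)
    (hxa : x ∈ Comp G U S a) (hxb : x ∈ Comp G U S b) : False := by
  obtain ⟨wa, hwa⟩ := hxa
  obtain ⟨wb, hwb⟩ := hxb
  obtain ⟨z, hz, hzS⟩ := hsep (wa.append wb.reverse) (by
    intro z hz
    rw [Walk.mem_support_append_iff, Walk.support_reverse, List.mem_reverse] at hz
    rcases hz with hz | hz
    · exact (hwa z hz).1
    · exact (hwb z hz).1)
  rw [Walk.mem_support_append_iff, Walk.support_reverse, List.mem_reverse] at hz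
  rcases hz with hz | hz
  · exact (hwa z hz).2 hzS
  · exact (hwb z hz).2 hzS

lemma no_edge {U S : Finset V} {a b u u' : V} (hsep : Sep G U S a b)
    (hu : u ∈ Comp G U S a) (hu' : u' ∈ Comp G U S b) (hadj : G.Adj u u') : False := by
  obtain ⟨wa, hwa⟩ := hu
  obtain ⟨wb, hwb⟩ := hu'
  obtain ⟨z, hz, hzS⟩ := hsep (wa.append ((Walk.cons hadj wb.reverse) : G.Walk u b)) (by
    intro z hz
    rw [Walk.mem_support_append_iff, Walk.support_cons] at hz
    rcases hz with hz | hz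
    · exact (hwa z hz).1
    · rcases List.mem_cons.mp hz with rfl | hz
      · exact (hwa z wa.end_mem_support).1
      · rw [Walk.support_reverse, List.mem_reverse] at hz
        exact (hwb z hz).1)
  rw [Walk.mem_support_append_iff, Walk.support_cons] at hz
  rcases hz with hz | hz
  · exact (hwa z hz).2 hzS
  · rcases List.mem_cons.mp hz with rfl | hz
    · exact (hwa z wa.end_mem_support).2 hzS
    · rw [Walk.support_reverse, List.mem_reverse] at hz
      exact (hwb z hz).2 hzS

lemma comp_nbr_closed {U S : Finset V} {a x c : V} (hx : x ∈ Comp G U S a)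
    (hc : c ∈ U) (hcs : c ∉ S) (hadj : G.Adj x c) : c ∈ Comp G U S a := by
  obtain ⟨w, hw⟩ := hx
  refine ⟨w.concat hadj, fun z hz => ?_⟩
  rw [Walk.support_concat, List.mem_append] at hz
  rcases hz with hz | hz
  · exact hw z hz
  · simp at hz
    subst hz
    exact ⟨hc, hcs⟩

lemma sep_neighbor {U S : Finset V} {a b s : V} (hna : a ∉ S) (hs : s ∈ S)
    (w : G.Walk a b) (hwU : ∀ z ∈ w.support, z ∈ U)
    (hwS : ∀ z ∈ w.support, z ∈ S → z = s) (hsw : s ∈ w.support) :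
    ∃ u ∈ Comp G U S a, G.Adj s u := by
  classical
  set t := w.takeUntil s hsw with ht
  have htnil : ¬ t.reverse.Nil := by
    rw [Walk.nil_iff_length_eq, Walk.length_reverse, ht]
    intro h0
    exact hna ((Walk.eq_of_length_eq_zero h0) ▸ hs)
  obtain ⟨u, hsu, r, hr⟩ := Walk.not_nil_iff.mp htnil
  have hsr : s ∉ r.support :=
    count_one_not_mem_tail_reverse t (w.count_support_takeUntil_eq_one hsw) hr
  have hrsub : ∀ z ∈ r.support, z ∈ U ∧ z ∉ S := by
    intro z hz
    have hzt : z ∈ t.support := by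
      have : z ∈ t.reverse.support := by
        rw [hr, Walk.support_cons]
        exact List.mem_cons_of_mem _ hz
      rwa [Walk.support_reverse, List.mem_reverse] at this
    have hzw : z ∈ w.support := w.support_takeUntil_subset hsw hzt
    refine ⟨hwU z hzw, fun hzS => ?_⟩
    exact hsr ((hwS z hzw hzS) ▸ hz)
  exact ⟨u, ⟨r.reverse, by
    intro z hz
    rw [Walk.support_reverse, List.mem_reverse] at hz
    exact hrsub z hz⟩, hsu⟩

lemma build_min_path {U S : Finset V} {x y c : V} (hnadj : ¬ G.Adj x y)
    (hn : ∃ u ∈ Comp G U S c, G.Adj x u) (hn' : ∃ u ∈ Comp G U S c, G.Adj y u) :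
    ∃ P : G.Walk x y, P.IsPath ∧ (∀ z ∈ P.support, z = x ∨ z = y ∨ z ∈ Comp G U S c) ∧
      (∀ w : G.Walk x y, (∀ z ∈ w.support, z = x ∨ z = y ∨ z ∈ Comp G U S c) →
        P.length ≤ w.length) := by
  classical
  obtain ⟨u, huA, hxu⟩ := hn
  obtain ⟨u', hu'A, hyu'⟩ := hn'
  obtain ⟨wA, hwA⟩ := conn_comp huA hu'A
  have hex : ∃ n, ∃ w : G.Walk x y,
      (∀ z ∈ w.support, z = x ∨ z = y ∨ z ∈ Comp G U S c) ∧ w.length = n := by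
    refine ⟨_, Walk.cons hxu (wA.concat hyu'.symm), ?_, rfl⟩
    intro z hz
    rw [Walk.support_cons] at hz
    rcases List.mem_cons.mp hz with rfl | hz
    · exact Or.inl rfl
    · rw [Walk.support_concat, List.mem_append] at hz
      rcases hz with hz | hz
      · exact Or.inr (Or.inr (hwA z hz))
      · simp at hz
        exact Or.inr (Or.inl hz)
  obtain ⟨w₀, hw₀, hlen₀⟩ := Nat.find_spec hex
  refine ⟨w₀.bypass, w₀.bypass_isPath, ?_, ?_⟩
  · intro z hz
    exact hw₀ z (w₀.support_bypass_subset hz)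
  · intro w hw
    calc w₀.bypass.length ≤ w₀.length := w₀.length_bypass_le
      _ = Nat.find hex := hlen₀
      _ ≤ w.length := Nat.find_min' hex ⟨w, hw, rfl⟩

lemma two_le_min_path_length {x y : V} {P : G.Walk x y} (hxy : x ≠ y)
    (hnadj : ¬ G.Adj x y) : 2 ≤ P.length := by
  by_contra h
  have h01 : P.length = 0 ∨ P.length = 1 := by omega
  rcases h01 with h0 | h1
  · exact hxy (Walk.eq_of_length_eq_zero h0)
  · have := P.adj_getVert_succ (i := 0) (by omega)
    rw [Walk.getVert_zero] at this
    have hy1 : P.getVert 1 = y := by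
      have := P.getVert_of_length_le (i := 1) (by omega)
      exact this
    rw [hy1] at this
    exact hnadj this

lemma sep_clique (hchord : IsChordal G) {U S : Finset V} {a b : V}
    (hsep : Sep G U S a b)
    (hnA : ∀ s ∈ S, ∃ u ∈ Comp G U S a, G.Adj s u)
    (hnB : ∀ s ∈ S, ∃ u ∈ Comp G U S b, G.Adj s u)
    {x y : V} (hx : x ∈ S) (hy : y ∈ S) (hxy : x ≠ y) : G.Adj x y := by
  classical
  by_contra hnadj
  obtain ⟨P, hPpath, hPsup, hPmin⟩ := build_min_path hnadj (hnA x hx) (hnA y hy)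
  obtain ⟨Q, hQpath, hQsup, hQmin⟩ := build_min_path hnadj (hnB x hx) (hnB y hy)
  have hP2 := two_le_min_path_length (G := G) (P := P) hxy hnadj
  have hQ2 := two_le_min_path_length (G := G) (P := Q) hxy hnadj
  have hxA : x ∉ Comp G U S a := fun h => (comp_subset h).2 hx
  have hyA : y ∉ Comp G U S a := fun h => (comp_subset h).2 hy
  have hxB : x ∉ Comp G U S b := fun h => (comp_subset h).2 hx
  have hyB : y ∉ Comp G U S b := fun h => (comp_subset h).2 hy
  have hAB : ∀ z, z ∈ Comp G U S a → z ∈ Comp G U S b → False :=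
    fun z hza hzb => comp_disjoint hsep hza hzb
  set C : G.Walk x x := P.append Q.reverse with hC
  have hClen : C.length = P.length + Q.length := by
    rw [hC, Walk.length_append, Walk.length_reverse]
  have hCedges : C.edges = P.edges ++ Q.edges.reverse := by
    rw [hC, Walk.edges_append, Walk.edges_reverse]
  have hedge_mem : ∀ {c d : V}, s(c, d) ∈ P.edges → s(c, d) ∈ Q.edges → False := by
    intro c d heP heQ
    have hcP := P.fst_mem_support_of_mem_edges heP
    have hdP := P.snd_mem_support_of_mem_edges heP
    have hcQ := Q.fst_mem_support_of_mem_edges heQ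
    have hdQ := Q.snd_mem_support_of_mem_edges heQ
    have hadj : G.Adj c d := P.adj_of_mem_edges heP
    have hcxy : c = x ∨ c = y := by
      rcases hPsup c hcP with rfl | rfl | h
      · exact Or.inl rfl
      · exact Or.inr rfl
      · rcases hQsup c hcQ with rfl | rfl | h'
        · exact Or.inl rfl
        · exact Or.inr rfl
        · exact absurd h' (fun h' => hAB c h h')
    have hdxy : d = x ∨ d = y := by
      rcases hPsup d hdP with rfl | rfl | h
      · exact Or.inl rfl
      · exact Or.inr rfl
      · rcases hQsup d hdQ with rfl | rfl | h'
        · exact Or.inl rfl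
        · exact Or.inr rfl
        · exact absurd h' (fun h' => hAB d h h')
    rcases hcxy with rfl | rfl <;> rcases hdxy with rfl | rfl
    · exact hadj.ne rfl
    · exact hnadj hadj
    · exact hnadj hadj.symm
    · exact hadj.ne rfl
  have hCcycle : C.IsCycle := by
    rw [Walk.isCycle_def]
    refine ⟨?_, ?_, ?_⟩
    · rw [Walk.isTrail_def, hCedges]
      refine List.Nodup.append hPpath.isTrail.edges_nodup
        (List.nodup_reverse.mpr hQpath.isTrail.edges_nodup) ?_
      intro e heP heQ
      rw [List.mem_reverse] at heQ
      induction e with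
      | h c d => exact hedge_mem heP heQ
    · intro h
      have := congrArg Walk.length h
      rw [hClen] at this
      simp only [Walk.length_nil] at this
      omega
    · have hsup : C.support.tail = P.support.tail ++ Q.reverse.support.tail := by
        rw [hC, Walk.support_append]
        rw [P.support_eq_cons]
        simp
      rw [hsup]
      refine List.Nodup.append (hPpath.support_nodup.tail)
        (hQpath.reverse.support_nodup.tail) ?_
      intro z hzP hzQ
      have hznex : z ≠ x := by
        intro rfl'
        subst rfl'
        have := hPpath.support_nodup
        rw [P.support_eq_cons] at this
        exact (List.nodup_cons.mp this).1 hzP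
      have hzney : z ≠ y := by
        intro rfl'
        subst rfl'
        have := hQpath.reverse.support_nodup
        rw [Q.reverse.support_eq_cons] at this
        exact (List.nodup_cons.mp this).1 hzQ
      have hzP' : z ∈ P.support := List.mem_of_mem_tail hzP
      have hzQ' : z ∈ Q.support := by
        have : z ∈ Q.reverse.support := List.mem_of_mem_tail hzQ
        rwa [Walk.support_reverse, List.mem_reverse] at this
      have hzA : z ∈ Comp G U S a := by
        rcases hPsup z hzP' with rfl | rfl | h
        · exact absurd rfl hznex
        · exact absurd rfl hzney
        · exact h
      have hzB : z ∈ Comp G U S b := by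
        rcases hQsup z hzQ' with rfl | rfl | h
        · exact absurd rfl hznex
        · exact absurd rfl hzney
        · exact h
      exact absurd hzB (fun h => hAB z hzA h)
  obtain ⟨c, d, hc, hd, hcd, hne⟩ := hchord C hCcycle (by omega)
  have memC : ∀ z ∈ C.support, z ∈ P.support ∨ z ∈ Q.support := by
    intro z hz
    rw [hC, Walk.mem_support_append_iff] at hz
    rcases hz with hz | hz
    · exact Or.inl hz
    · rw [Walk.support_reverse, List.mem_reverse] at hz
      exact Or.inr hz
  have casePP : ∀ {c d : V}, c ∈ P.support → d ∈ P.support → G.Adj c d →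
      s(c, d) ∉ C.edges → False := by
    intro c d hcP hdP hcd hne
    exact hne (by
      rw [hCedges, List.mem_append]
      exact Or.inl (chord_of_min P hPsup hPmin hcP hdP hcd))
  have caseQQ : ∀ {c d : V}, c ∈ Q.support → d ∈ Q.support → G.Adj c d →
      s(c, d) ∉ C.edges → False := by
    intro c d hcQ hdQ hcd hne
    exact hne (by
      rw [hCedges, List.mem_append, List.mem_reverse]
      exact Or.inr (chord_of_min Q hQsup hQmin hcQ hdQ hcd))
  have hxQ : x ∈ Q.support := Q.start_mem_support
  have hyQ : y ∈ Q.support := Q.end_mem_support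
  have hxP : x ∈ P.support := P.start_mem_support
  have hyP : y ∈ P.support := P.end_mem_support
  rcases memC c hc with hcP | hcQ
  · by_cases hdP : d ∈ P.support
    · exact casePP hcP hdP hcd hne
    · have hdQ : d ∈ Q.support := (memC d hd).resolve_left hdP
      by_cases hcQ : c ∈ Q.support
      · exact caseQQ hcQ hdQ hcd hne
      · have hcA : c ∈ Comp G U S a := by
          rcases hPsup c hcP with rfl | rfl | h
          · exact absurd hxQ hcQ
          · exact absurd hyQ hcQ
          · exact h
        have hdB : d ∈ Comp G U S b := by
          rcases hQsup d hdQ with rfl | rfl | h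
          · exact absurd hxP hdP
          · exact absurd hyP hdP
          · exact h
        exact no_edge hsep hcA hdB hcd
  · by_cases hdQ : d ∈ Q.support
    · exact caseQQ hcQ hdQ hcd hne
    · have hdP : d ∈ P.support := (memC d hd).resolve_right hdQ
      by_cases hcP : c ∈ P.support
      · exact casePP hcP hdP hcd hne
      · have hdA : d ∈ Comp G U S a := by
          rcases hPsup d hdP with rfl | rfl | h
          · exact absurd hxQ hdQ
          · exact absurd hyQ hdQ
          · exact h
        have hcB : c ∈ Comp G U S b := by
          rcases hQsup c hcQ with rfl | rfl | h
          · exact absurd hxP hcP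
          · exact absurd hyP hcP
          · exact h
        exact no_edge hsep hdA hcB hcd.symm

theorem dirac (hchord : IsChordal G) :
    ∀ (n : ℕ) (U : Finset V), U.card ≤ n → U.Nonempty →
      (∃ v, SimpIn G U v) ∧
      (∀ a ∈ U, ∀ b ∈ U, a ≠ b → ¬ G.Adj a b →
        ∃ v w, SimpIn G U v ∧ SimpIn G U w ∧ v ≠ w ∧ ¬ G.Adj v w) := by
  classical
  intro n
  induction n with
  | zero =>
    intro U hcard hne
    rw [Nat.le_zero, Finset.card_eq_zero] at hcard
    exact absurd hne (by simp [hcard])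
  | succ n ih =>
    intro U hcard hne
    by_cases hcl : ∀ p ∈ U, ∀ q ∈ U, p ≠ q → G.Adj p q
    · obtain ⟨v₀, hv₀⟩ := hne
      refine ⟨⟨v₀, hv₀, fun x hx y hy _ _ hxy => hcl x hx y hy hxy⟩, ?_⟩
      intro a ha b hb hab hnadj
      exact absurd (hcl a ha b hb hab) hnadj
    · push_neg at hcl
      obtain ⟨a, ha, b, hb, hab, hnadj⟩ := hcl
      have hsep0 : ∃ k, ∃ S : Finset V,
          (S ⊆ U ∧ a ∉ S ∧ b ∉ S ∧ Sep G U S a b) ∧ S.card = k := by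
        refine ⟨_, (U.erase a).erase b, ⟨?_, ?_, ?_, ?_⟩, rfl⟩
        · exact (Finset.erase_subset _ _).trans (Finset.erase_subset _ _)
        · simp [Finset.mem_erase]
        · simp [Finset.mem_erase]
        · intro w hw
          have hnnil : ¬ w.Nil := by
            rw [Walk.nil_iff_length_eq]
            intro h0
            exact hab (Walk.eq_of_length_eq_zero h0)
          have hlen1 : 1 ≤ w.length := Walk.not_nil_iff_lt_length.mp hnnil
          have hadj1 : G.Adj a (w.getVert 1) := Walk.adj_snd hnnil
          have hmem : w.getVert 1 ∈ w.support :=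
            Walk.mem_support_iff_exists_getVert.mpr ⟨1, rfl, by omega⟩
          refine ⟨w.getVert 1, hmem, ?_⟩
          rw [Finset.mem_erase, Finset.mem_erase]
          exact ⟨fun h => hnadj (h ▸ hadj1), hadj1.ne', hw _ hmem⟩
      obtain ⟨S, ⟨hSU, haS, hbS, hsep⟩, hScard⟩ := Nat.find_spec hsep0
      have hmin : ∀ s ∈ S, ∃ w : G.Walk a b, (∀ z ∈ w.support, z ∈ U) ∧
          (∀ z ∈ w.support, z ∈ S → z = s) ∧ s ∈ w.support := by
        intro s hsS
        by_contra hcon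
        have hsep' : Sep G U (S.erase s) a b := by
          intro w hw
          by_contra hno
          push_neg at hno
          obtain ⟨z, hz, hzS⟩ := hsep w hw
          have hzs : ∀ z' ∈ w.support, z' ∈ S → z' = s := by
            intro z' hz' hz'S
            by_contra hne
            exact hno z' hz' (Finset.mem_erase.mpr ⟨hne, hz'S⟩)
          exact hcon ⟨w, hw, hzs, (hzs z hz hzS) ▸ hz⟩
        have h1 : Nat.find hsep0 ≤ (S.erase s).card :=
          Nat.find_min' hsep0 ⟨S.erase s,
            ⟨(S.erase_subset s).trans hSU,
             fun h => haS (Finset.mem_of_mem_erase h),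
             fun h => hbS (Finset.mem_of_mem_erase h), hsep'⟩, rfl⟩
        have h2 : (S.erase s).card < S.card := Finset.card_erase_lt_of_mem hsS
        omega
      have hnA : ∀ s ∈ S, ∃ u ∈ Comp G U S a, G.Adj s u := by
        intro s hsS
        obtain ⟨w, hwU, hwS, hsw⟩ := hmin s hsS
        exact sep_neighbor haS hsS w hwU hwS hsw
      have hnB : ∀ s ∈ S, ∃ u ∈ Comp G U S b, G.Adj s u := by
        intro s hsS
        obtain ⟨w, hwU, hwS, hsw⟩ := hmin s hsS
        refine sep_neighbor hbS hsS w.reverse ?_ ?_ ?_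
        · intro z hz
          rw [Walk.support_reverse, List.mem_reverse] at hz
          exact hwU z hz
        · intro z hz
          rw [Walk.support_reverse, List.mem_reverse] at hz
          exact hwS z hz
        · rw [Walk.support_reverse, List.mem_reverse]
          exact hsw
      have hSclique : ∀ x ∈ S, ∀ y ∈ S, x ≠ y → G.Adj x y :=
        fun x hx y hy hxy => sep_clique hchord hsep hnA hnB hx hy hxy
      have side : ∀ (a' b' : V), a' ∈ U → b' ∈ U → a' ∉ S → b' ∉ S →
          Sep G U S a' b' → ∃ v ∈ Comp G U S a', SimpIn G U v := by
        intro a' b' ha'U hb'U ha'S hb'S hsep'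
        set A := Comp G U S a' with hA
        set U' : Finset V := U.filter (· ∈ A) ∪ S with hU'
        have ha'A : a' ∈ A := mem_comp_self ha'U ha'S
        have hU'sub : U' ⊆ U := by
          intro z hz
          rw [hU', Finset.mem_union] at hz
          rcases hz with hz | hz
          · exact (Finset.mem_filter.mp hz).1
          · exact hSU hz
        have hmemA : ∀ z ∈ A, z ∈ U' := fun z hz =>
          Finset.mem_union_left _ (Finset.mem_filter.mpr ⟨(comp_subset hz).1, hz⟩)
        have hbnot : b' ∉ U' := by
          rw [hU', Finset.mem_union]
          rintro (hz | hz)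
          · exact comp_disjoint hsep' (Finset.mem_filter.mp hz).2 (mem_comp_self hb'U hb'S)
          · exact hb'S hz
        have hU'card : U'.card ≤ n := by
          have hss : U' ⊂ U := ⟨hU'sub, fun h => hbnot (h hb'U)⟩
          have := Finset.card_lt_card hss
          omega
        have hclos : ∀ v, v ∈ A → ∀ x, x ∈ U → G.Adj v x → x ∈ U' := by
          intro v hv x hxU hadj
          by_cases hxS : x ∈ S
          · exact Finset.mem_union_right _ hxS
          · exact hmemA _ (comp_nbr_closed hv hxU hxS hadj)
        obtain ⟨⟨v₀, hv₀⟩, hpair⟩ := ih U' hU'card ⟨a', hmemA a' ha'A⟩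
        by_cases hcl' : ∀ p ∈ U', ∀ q ∈ U', p ≠ q → G.Adj p q
        · refine ⟨a', ha'A, ha'U, ?_⟩
          intro x hx y hy hax hay hxy
          exact hcl' x (hclos a' ha'A x hx hax) y (hclos a' ha'A y hy hay) hxy
        · push_neg at hcl'
          obtain ⟨p, hp, q, hq, hpq, hnadjpq⟩ := hcl'
          obtain ⟨v, w, hvS, hwS, hvw, hnadjvw⟩ := hpair p hp q hq hpq hnadjpq
          have hone : v ∈ A ∨ w ∈ A := by
            by_contra hcon
            push_neg at hcon
            have hv' : v ∈ S := by
              rcases Finset.mem_union.mp hvS.1 with h | h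
              · exact absurd (Finset.mem_filter.mp h).2 hcon.1
              · exact h
            have hw' : w ∈ S := by
              rcases Finset.mem_union.mp hwS.1 with h | h
              · exact absurd (Finset.mem_filter.mp h).2 hcon.2
              · exact h
            exact hnadjvw (hSclique v hv' w hw' hvw)
          have lift : ∀ v, v ∈ A → SimpIn G U' v → SimpIn G U v := by
            intro v hvA hs
            refine ⟨(comp_subset hvA).1, ?_⟩
            intro x hx y hy hax hay hxy
            exact hs.2 (hclos v hvA x hx hax) (hclos v hvA y hy hay) hax hay hxy
          rcases hone with h | h
          · exact ⟨v, h, lift v h hvS⟩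
          · exact ⟨w, h, lift w h hwS⟩
      obtain ⟨vA, hvAA, hvAsimp⟩ := side a b ha hb haS hbS hsep
      obtain ⟨vB, hvBB, hvBsimp⟩ := side b a hb ha hbS haS (sep_symm hsep)
      have hvne : vA ≠ vB := fun h => comp_disjoint hsep hvAA (h ▸ hvBB)
      have hvnadj : ¬ G.Adj vA vB := fun h => no_edge hsep hvAA hvBB h
      exact ⟨⟨vA, hvAsimp⟩, fun _ _ _ _ _ _ => ⟨vA, vB, hvAsimp, hvBsimp, hvne, hvnadj⟩⟩

theorem helly (hchord : IsChordal G) :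
    ∀ (n : ℕ) (U : Finset V) (F : Set (Set V)), U.card ≤ n →
      (∀ S ∈ F, S.Nonempty) → (∀ S ∈ F, ∀ x ∈ S, x ∈ U) → (∀ S ∈ F, ConnIn G S) →
      (∀ S ∈ F, ∀ T ∈ F, Touch G S T) →
      ∃ X : Finset V, G.IsClique (X : Set V) ∧ ∀ S ∈ F, ∃ w ∈ X, w ∈ S := by
  classical
  intro n
  induction n with
  | zero =>
    intro U F hcard hne hsub hconn htouch
    refine ⟨∅, by simp, ?_⟩
    intro S hS
    obtain ⟨x, hx⟩ := hne S hS
    have := hsub S hS x hx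
    rw [Nat.le_zero, Finset.card_eq_zero] at hcard
    simp [hcard] at this
  | succ n ih =>
    intro U F hcard hne hsub hconn htouch
    by_cases hFne : F.Nonempty
    swap
    · refine ⟨∅, by simp, fun S hS => absurd ⟨S, hS⟩ hFne⟩
    obtain ⟨S₀, hS₀⟩ := hFne
    obtain ⟨x₀, hx₀⟩ := hne S₀ hS₀
    have hUne : U.Nonempty := ⟨x₀, hsub S₀ hS₀ x₀ hx₀⟩
    obtain ⟨⟨v, hsimp⟩, -⟩ := dirac hchord (n + 1) U hcard hUne
    have hnbr : ∀ S ∈ F, v ∈ S → (∃ s ∈ S, s ≠ v) → ∃ u ∈ S, u ≠ v ∧ G.Adj v u := by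
      intro S hS hvS ⟨s, hsS, hsv⟩
      obtain ⟨w, hw⟩ := hconn S hS hvS hsS
      have hnnil : ¬ w.Nil := by
        rw [Walk.nil_iff_length_eq]
        intro h0
        exact hsv (Walk.eq_of_length_eq_zero h0).symm
      obtain ⟨u, hadj, r, hr⟩ := Walk.not_nil_iff.mp hnnil
      refine ⟨u, ?_, hadj.ne', hadj⟩
      apply hw
      rw [hr, Walk.support_cons]
      exact List.mem_cons_of_mem _ r.start_mem_support
    by_cases hsing : ∃ S ∈ F, S ⊆ {v}
    · obtain ⟨S₁, hS₁, hS₁v⟩ := hsing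
      refine ⟨insert v (U.filter (G.Adj v ·)), ?_, ?_⟩
      · intro p hp q hq hpq
        simp only [Finset.coe_insert, Set.mem_insert_iff, Finset.coe_filter,
          Set.mem_setOf_eq, Finset.mem_coe, Finset.mem_filter] at hp hq
        rcases hp with rfl | ⟨hpU, hpv⟩
        · rcases hq with rfl | ⟨hqU, hqv⟩
          · exact absurd rfl hpq
          · exact hqv
        · rcases hq with rfl | ⟨hqU, hqv⟩
          · exact hpv.symm
          · exact hsimp.2 hpU hqU hpv hqv hpq
      · intro S hS
        obtain ⟨s, hsS, t, htS, hst⟩ := htouch S hS S₁ hS₁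
        have htv : t = v := hS₁v htS
        subst htv
        rcases hst with rfl | hadj
        · exact ⟨s, Finset.mem_insert_self _ _, hsS⟩
        · exact ⟨s, Finset.mem_insert_of_mem
            (Finset.mem_filter.mpr ⟨hsub S hS s hsS, hadj.symm⟩), hsS⟩
    · push_neg at hsing
      have hvne : ∀ S ∈ F, ∃ s ∈ S, s ≠ v := by
        intro S hS
        obtain ⟨s, hsS, hsv⟩ := Set.not_subset.mp (hsing S hS)
        exact ⟨s, hsS, by simpa using hsv⟩
      set F' : Set (Set V) := (fun S => S \ {v}) '' F with hF'
      have hmain := ih (U.erase v) F' ?_ ?_ ?_ ?_ ?_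
      · obtain ⟨X, hX, hcov⟩ := hmain
        refine ⟨X, hX, fun S hS => ?_⟩
        obtain ⟨w, hwX, hwS⟩ := hcov (S \ {v}) ⟨S, hS, rfl⟩
        exact ⟨w, hwX, hwS.1⟩
      · have := Finset.card_erase_lt_of_mem hsimp.1
        omega
      · rintro S' ⟨S, hS, rfl⟩
        obtain ⟨s, hsS, hsv⟩ := hvne S hS
        exact ⟨s, hsS, hsv⟩
      · rintro S' ⟨S, hS, rfl⟩ x hx
        exact Finset.mem_erase.mpr ⟨hx.2, hsub S hS x hx.1⟩
      · rintro S' ⟨S, hS, rfl⟩ x hx y hy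
        obtain ⟨w, hw⟩ := hconn S hS hx.1 hy.1
        obtain ⟨w', hw'⟩ := reroute hsimp (hsub S hS) w.length w le_rfl hw hx.2 hy.2
        exact ⟨w', fun z hz => ⟨(hw' z hz).1, (hw' z hz).2⟩⟩
      · rintro S' ⟨S, hS, rfl⟩ T' ⟨T, hT, rfl⟩
        obtain ⟨s, hsS, t, htT, hst⟩ := htouch S hS T hT
        have hgetS : v ∈ S → ∃ u ∈ S, u ≠ v ∧ G.Adj v u :=
          fun h => hnbr S hS h (hvne S hS)
        have hgetT : v ∈ T → ∃ u ∈ T, u ≠ v ∧ G.Adj v u :=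
          fun h => hnbr T hT h (hvne T hT)
        by_cases hsv : s = v
        · have hvS : v ∈ S := hsv ▸ hsS
          rw [hsv] at hst
          obtain ⟨u, huS, huv, hadju⟩ := hgetS hvS
          by_cases htv : t = v
          · have hvT : v ∈ T := htv ▸ htT
            rw [htv] at hst
            obtain ⟨u', hu'T, hu'v, hadju'⟩ := hgetT hvT
            by_cases huu : u = u'
            · exact ⟨u, ⟨huS, huv⟩, u', ⟨hu'T, hu'v⟩, Or.inl huu⟩
            · exact ⟨u, ⟨huS, huv⟩, u', ⟨hu'T, hu'v⟩, Or.inr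
                (hsimp.2 (hsub S hS u huS) (hsub T hT u' hu'T) hadju hadju' huu)⟩
          · rcases hst with heq | hadj
            · exact absurd heq.symm htv
            · by_cases hut : u = t
              · exact ⟨u, ⟨huS, huv⟩, t, ⟨htT, htv⟩, Or.inl hut⟩
              · exact ⟨u, ⟨huS, huv⟩, t, ⟨htT, htv⟩, Or.inr
                  (hsimp.2 (hsub S hS u huS) (hsub T hT t htT) hadju hadj hut)⟩
        · by_cases htv : t = v
          · have hvT : v ∈ T := htv ▸ htT
            rw [htv] at hst
            obtain ⟨u', hu'T, hu'v, hadju'⟩ := hgetT hvT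
            rcases hst with heq | hadj
            · exact absurd heq hsv
            · by_cases hsu : s = u'
              · exact ⟨s, ⟨hsS, hsv⟩, u', ⟨hu'T, hu'v⟩, Or.inl hsu⟩
              · exact ⟨s, ⟨hsS, hsv⟩, u', ⟨hu'T, hu'v⟩, Or.inr
                  (hsimp.2 (hsub S hS s hsS) (hsub T hT u' hu'T) hadj.symm hadju' hsu)⟩
          · exact ⟨s, ⟨hsS, hsv⟩, t, ⟨htT, htv⟩, hst⟩

lemma half {a b : V} (W : G.Walk a b) (hW : W.IsPath) {c : V} (hc : c ∈ W.support) :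
    ∃ (z : V) (H : G.Walk z c), H.IsPath ∧ (∀ t ∈ H.support, t ∈ W.support) ∧
      W.length ≤ 2 * H.length := by
  classical
  have hsplit : (W.takeUntil c hc).length + (W.dropUntil c hc).length = W.length := by
    have := congrArg Walk.length (W.take_spec hc)
    rwa [Walk.length_append] at this
  rcases le_total (W.takeUntil c hc).length (W.dropUntil c hc).length with h | h
  · refine ⟨b, (W.dropUntil c hc).reverse, (hW.dropUntil hc).reverse, ?_, ?_⟩
    · intro t ht
      rw [Walk.support_reverse, List.mem_reverse] at ht
      exact W.support_dropUntil_subset hc ht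
    · rw [Walk.length_reverse]
      omega
  · refine ⟨a, W.takeUntil c hc, hW.takeUntil hc, W.support_takeUntil_subset hc, by omega⟩

lemma detours_intersect (hconn : G.Connected) {u v x y : V}
    {P : G.Walk u v} (hP : IsDetour G P) {Q : G.Walk x y} (hQ : IsDetour G Q) :
    ∃ z, z ∈ P.support ∧ z ∈ Q.support := by
  classical
  by_contra hdisj
  push_neg at hdisj
  have hlen : Q.length = P.length := le_antisymm (hP.2 Q hQ.1) (hQ.2 P hP.1)
  have hex : ∃ n, ∃ (p q : V) (R : G.Walk p q),
      p ∈ P.support ∧ q ∈ Q.support ∧ R.length = n := by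
    obtain ⟨R⟩ := hconn u x
    exact ⟨R.length, u, x, R, P.start_mem_support, Q.start_mem_support, rfl⟩
  obtain ⟨p, q, R₀, hpP, hqQ, hR₀len⟩ := Nat.find_spec hex
  set R := R₀.bypass with hR
  have hRpath : R.IsPath := R₀.bypass_isPath
  have hRle : R.length ≤ Nat.find hex := hR₀len ▸ R₀.length_bypass_le
  have hRmin : ∀ (p' q' : V) (R' : G.Walk p' q'), p' ∈ P.support → q' ∈ Q.support →
      Nat.find hex ≤ R'.length := fun p' q' R' h1 h2 =>
    Nat.find_min' hex ⟨p', q', R', h1, h2, rfl⟩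
  have hRP : ∀ z ∈ R.support, z ∈ P.support → z = p := by
    intro z hz hzP
    by_contra hne
    have hsplit : (R.takeUntil z hz).length + (R.dropUntil z hz).length = R.length := by
      have := congrArg Walk.length (R.take_spec hz)
      rwa [Walk.length_append] at this
    have htake : 1 ≤ (R.takeUntil z hz).length := by
      rcases Nat.eq_zero_or_pos (R.takeUntil z hz).length with h0 | h1
      · exact absurd (Walk.eq_of_length_eq_zero h0).symm hne
      · exact h1
    have := hRmin z q (R.dropUntil z hz) hzP hqQ
    omega
  have hRQ : ∀ z ∈ R.support, z ∈ Q.support → z = q := by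
    intro z hz hzQ
    by_contra hne
    have hsplit : (R.takeUntil z hz).length + (R.dropUntil z hz).length = R.length := by
      have := congrArg Walk.length (R.take_spec hz)
      rwa [Walk.length_append] at this
    have hdrop : 1 ≤ (R.dropUntil z hz).length := by
      rcases Nat.eq_zero_or_pos (R.dropUntil z hz).length with h0 | h1
      · exact absurd (Walk.eq_of_length_eq_zero h0) hne
      · exact h1
    have := hRmin p z (R.takeUntil z hz) hpP hzQ
    omega
  have hR1 : 1 ≤ R.length := by
    rcases Nat.eq_zero_or_pos R.length with h0 | h1
    · exact absurd ((Walk.eq_of_length_eq_zero h0) ▸ hqQ) (hdisj p hpP)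
    · exact h1
  obtain ⟨zp, Hp, hHp_path, hHp_sub, hHp_len⟩ := half P hP.1 hpP
  obtain ⟨zq, Hq, hHq_path, hHq_sub, hHq_len⟩ := half Q hQ.1 hqQ
  have hW1 : (Hp.append R).IsPath := by
    refine append_isPath hHp_path hRpath ?_
    intro z hz1 hz2
    exact hRP z hz2 (hHp_sub z hz1)
  have hW : ((Hp.append R).append Hq.reverse).IsPath := by
    refine append_isPath hW1 hHq_path.reverse ?_
    intro z hz1 hz2
    rw [Walk.support_reverse, List.mem_reverse] at hz2
    have hzQ : z ∈ Q.support := hHq_sub z hz2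
    rw [Walk.mem_support_append_iff] at hz1
    rcases hz1 with hz1 | hz1
    · exact absurd hzQ (hdisj z (hHp_sub z hz1))
    · exact hRQ z hz1 hzQ
  have hWlen := hP.2 _ hW
  rw [Walk.length_append, Walk.length_append, Walk.length_reverse] at hWlen
  omega

end TotalCliqueProof

/-- Every finite connected chordal graph contains a total clique:
a clique intersecting every longest path. -/
theorem exists_total_clique {V : Type*} [Fintype V] (G : SimpleGraph V)
    (hconn : G.Connected) (hchord : IsChordal G) :
    ∃ X : Finset V, G.IsClique (X : Set V) ∧
      ∀ ⦃u v : V⦄ (P : G.Walk u v), IsDetour G P → ∃ w ∈ X, w ∈ P.support := by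
  classical
  set F : Set (Set V) :=
    {S | ∃ (u v : V) (P : G.Walk u v), IsDetour G P ∧ S = {z | z ∈ P.support}} with hF
  have hne : ∀ S ∈ F, S.Nonempty := by
    rintro S ⟨u, v, P, hP, rfl⟩
    exact ⟨u, P.start_mem_support⟩
  have hsub : ∀ S ∈ F, ∀ x ∈ S, x ∈ (Finset.univ : Finset V) :=
    fun S _ x _ => Finset.mem_univ x
  have hconnin : ∀ S ∈ F, TotalCliqueProof.ConnIn G S := by
    rintro S ⟨u, v, P, hP, rfl⟩
    intro a ha b hb
    refine ⟨(P.takeUntil a ha).reverse.append (P.takeUntil b hb), ?_⟩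
    intro z hz
    rw [Walk.mem_support_append_iff, Walk.support_reverse, List.mem_reverse] at hz
    rcases hz with hz | hz
    · exact P.support_takeUntil_subset ha hz
    · exact P.support_takeUntil_subset hb hz
  have htouch : ∀ S ∈ F, ∀ T ∈ F, TotalCliqueProof.Touch G S T := by
    rintro S ⟨u, v, P, hP, rfl⟩ T ⟨x, y, Q, hQ, rfl⟩
    obtain ⟨z, hzP, hzQ⟩ := TotalCliqueProof.detours_intersect hconn hP hQ
    exact ⟨z, hzP, z, hzQ, Or.inl rfl⟩
  obtain ⟨X, hX, hcov⟩ := TotalCliqueProof.helly hchord (Fintype.card V)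
    Finset.univ F (le_of_eq Finset.card_univ) hne hsub hconnin htouch
  refine ⟨X, hX, ?_⟩
  intro u v P hP
  exact hcov {z | z ∈ P.support} ⟨u, v, P, hP, rfl⟩
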